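/- Let Ω be a finite nonempty set, ρ a probability distribution on Ω, ε ≥ 0 and α ∈ [0,1]. Let ρ* be any minimizer of Σ_{x∈Ω}(ρ'(x) − α)_+ over probability distributions ρ' on Ω with TV(ρ', ρ) ≤ ε. Then the joint distribution 𝒫* on Ω × 2^Ω defined by 𝒫*(X = x, R = {x}) = min(ρ*(x), α), 𝒫*(X = x, R = ∅) = (ρ*(x) − α)_+, and 𝒫*(X = x, R = R₀) = 0 for all other R₀, is an ε-distorted watermarking scheme of ρ with Type I error at most α and Type II error equal to Σ_{x∈Ω}(ρ*(x) − α)_+ = min{ Σ_{x∈Ω}(ρ'(x) − α)_+ : TV(ρ', ρ) ≤ ε }. -/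
import Mathlib


open Finset

noncomputable section

/-- The marginal distribution of the output `X` under a joint distribution `P`
on `Ω × 2^Ω`. -/
def marginalX {Ω : Type*} [Fintype Ω] [DecidableEq Ω]
    (P : Ω × Finset Ω → ℝ) (x : Ω) : ℝ :=
  ∑ R : Finset Ω, P (x, R)

/-- Total variation distance between two (finitely supported) distributions. -/
def tvDist {Ω : Type*} [Fintype Ω] (μ ν : Ω → ℝ) : ℝ :=
  (∑ x, |μ x - ν x|) / 2

/-- Type II error of a watermarking scheme: the probability that `X ∉ R`. -/
def typeII {Ω : Type*} [Fintype Ω] [DecidableEq Ω]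
    (P : Ω × Finset Ω → ℝ) : ℝ :=
  ∑ p : Ω × Finset Ω, if p.1 ∉ p.2 then P p else 0

/-- The scheme `𝒫*` built from a minimizer `ρ*` is an `ε`-distorted watermarking
scheme of `ρ`, with Type I error at most `α` and Type II error
`∑_x (ρ*(x) − α)₊ = min { ∑_x (ρ'(x) − α)₊ : TV(ρ', ρ) ≤ ε }`. -/
theorem stmt_1 {Ω : Type*} [Fintype Ω] [DecidableEq Ω] [Nonempty Ω]
    (ρ : Ω → ℝ) (hρ0 : ∀ x, 0 ≤ ρ x) (hρ1 : ∑ x, ρ x = 1)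
    (ε : ℝ) (hε : 0 ≤ ε) (α : ℝ) (hα : α ∈ Set.Icc (0 : ℝ) 1)
    (ρs : Ω → ℝ) (hρs0 : ∀ x, 0 ≤ ρs x) (hρs1 : ∑ x, ρs x = 1)
    (hρstv : tvDist ρs ρ ≤ ε)
    (hmin : ∀ ρ' : Ω → ℝ, (∀ x, 0 ≤ ρ' x) → (∑ x, ρ' x = 1) → tvDist ρ' ρ ≤ ε →
      ∑ x, max (ρs x - α) 0 ≤ ∑ x, max (ρ' x - α) 0)
    (P : Ω × Finset Ω → ℝ)
    (hPdef : P = fun p =>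
      if p.2 = {p.1} then min (ρs p.1) α
      else if p.2 = ∅ then max (ρs p.1 - α) 0
      else 0) :
    (∀ p, 0 ≤ P p) ∧ (∑ p, P p = 1) ∧
    tvDist (marginalX P) ρ ≤ ε ∧
    (∀ y : Ω, (∑ p : Ω × Finset Ω, if y ∈ p.2 then P p else 0) ≤ α) ∧
    typeII P = ∑ x, max (ρs x - α) 0 ∧
    (∑ x, max (ρs x - α) 0)
      = sInf {s : ℝ | ∃ ρ' : Ω → ℝ, (∀ x, 0 ≤ ρ' x) ∧ (∑ x, ρ' x = 1) ∧
          tvDist ρ' ρ ≤ ε ∧ s = ∑ x, max (ρ' x - α) 0} := by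
  obtain ⟨hα0, hα1⟩ := hα
  subst hPdef
  have hsx : ∀ x : Ω, ({x} : Finset Ω) ≠ ∅ := fun x => Finset.singleton_ne_empty x
  have hsplit : ∀ x : Ω, ∀ R : Finset Ω,
      (if R = {x} then min (ρs x) α else if R = ∅ then max (ρs x - α) 0 else 0)
      = (if R = {x} then min (ρs x) α else 0) + (if R = ∅ then max (ρs x - α) 0 else 0) := by
    intro x R
    by_cases h1 : R = {x}
    · subst h1; simp [hsx x]
    · simp [h1]
  have hrowsum : ∀ x : Ω,
      (∑ R : Finset Ω, if R = {x} then min (ρs x) α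
        else if R = ∅ then max (ρs x - α) 0 else 0) = ρs x := by
    intro x
    rw [Finset.sum_congr rfl (fun R _ => hsplit x R), Finset.sum_add_distrib,
      Finset.sum_ite_eq' Finset.univ ({x} : Finset Ω) (fun _ => min (ρs x) α),
      Finset.sum_ite_eq' Finset.univ (∅ : Finset Ω) (fun _ => max (ρs x - α) 0)]
    rcases le_or_gt (ρs x) α with h | h
    · rw [min_eq_left h, max_eq_right (by linarith)]; simp
    · rw [min_eq_right h.le, max_eq_left (by linarith)]; simp
  have hmarg : marginalX (fun p : Ω × Finset Ω =>
      if p.2 = {p.1} then min (ρs p.1) α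
      else if p.2 = ∅ then max (ρs p.1 - α) 0 else 0) = ρs := by
    funext x
    exact hrowsum x
  refine ⟨?_, ?_, ?_, ?_, ?_, ?_⟩
  · intro p
    dsimp only
    split
    · exact le_min (hρs0 _) hα0
    · split
      · exact le_max_right _ _
      · exact le_refl 0
  · rw [Fintype.sum_prod_type]
    simp only []
    calc (∑ x : Ω, ∑ R : Finset Ω, if R = {x} then min (ρs x) α
          else if R = ∅ then max (ρs x - α) 0 else 0)
        = ∑ x : Ω, ρs x := Finset.sum_congr rfl (fun x _ => hrowsum x)
      _ = 1 := hρs1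
  · rw [hmarg]; exact hρstv
  · intro y
    have : (∑ p : Ω × Finset Ω, if y ∈ p.2 then
        (if p.2 = {p.1} then min (ρs p.1) α
          else if p.2 = ∅ then max (ρs p.1 - α) 0 else 0) else 0)
        = min (ρs y) α := by
      rw [Fintype.sum_prod_type]
      have hx : ∀ x : Ω, (∑ R : Finset Ω, if y ∈ R then
          (if R = {x} then min (ρs x) α
            else if R = ∅ then max (ρs x - α) 0 else 0) else 0)
          = if x = y then min (ρs y) α else 0 := by
        intro x
        have : ∀ R : Finset Ω, (if y ∈ R then
            (if R = {x} then min (ρs x) α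
              else if R = ∅ then max (ρs x - α) 0 else 0) else 0)
            = if R = {x} then (if x = y then min (ρs y) α else 0) else 0 := by
          intro R
          by_cases h1 : R = {x}
          · subst h1
            by_cases h2 : x = y
            · subst h2; simp
            · simp [Finset.mem_singleton, Ne.symm h2, h2]
          · by_cases h2 : R = ∅ <;> simp [h1, h2, Ne.symm (hsx x)]
        rw [Finset.sum_congr rfl (fun R _ => this R),
          Finset.sum_ite_eq' Finset.univ ({x} : Finset Ω)]
        simp
      rw [Finset.sum_congr rfl (fun x _ => hx x),
        Finset.sum_ite_eq' Finset.univ y]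
      simp
    rw [this]
    exact min_le_right _ _
  · unfold typeII
    rw [Fintype.sum_prod_type]
    refine Finset.sum_congr rfl (fun x _ => ?_)
    have : ∀ R : Finset Ω, (if x ∉ R then
        (if R = {x} then min (ρs x) α
          else if R = ∅ then max (ρs x - α) 0 else 0) else 0)
        = if R = ∅ then max (ρs x - α) 0 else 0 := by
      intro R
      by_cases h1 : R = {x}
      · subst h1; simp [hsx x]
      · by_cases h2 : R = ∅
        · subst h2; simp [Ne.symm (hsx x)]
        · simp [h1, h2]
    rw [Finset.sum_congr rfl (fun R _ => this R),
      Finset.sum_ite_eq' Finset.univ (∅ : Finset Ω)]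
    simp
  · refine le_antisymm ?_ ?_
    · apply le_csInf
      · exact ⟨∑ x, max (ρs x - α) 0, ρs, hρs0, hρs1, hρstv, rfl⟩
      · rintro s ⟨ρ', h0, h1, htv, rfl⟩
        exact hmin ρ' h0 h1 htv
    · apply csInf_le
      · refine ⟨0, ?_⟩
        rintro s ⟨ρ', h0, h1, htv, rfl⟩
        exact Finset.sum_nonneg (fun x _ => le_max_right _ _)
      · exact ⟨ρs, hρs0, hρs1, hρstv, rfl⟩
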